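/- Let n be a natural number and let q ∈ ℂ with q ≠ 0 and q^i ≠ 1 for all integers 1 ≤ i ≤ n. Then for every t ∈ ℂ: (t;q)_n = Σ_{j=0}^{n} [(q^{−n};q)_j / (q;q)_j] · q^{jn} · t^j. -/

import Mathlib

open Finset

private noncomputable def qA (q : ℂ) (n j : ℕ) : ℂ :=
  ∏ i ∈ range j, (1 - q ^ (-(n : ℤ)) * q ^ i)

private noncomputable def qD (q : ℂ) (j : ℕ) : ℂ :=
  ∏ i ∈ range j, (1 - q ^ (i + 1))

private noncomputable def qc (q : ℂ) (n j : ℕ) : ℂ :=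
  qA q n j / qD q j * q ^ (j * n)

private lemma qA_succ_left (q : ℂ) (hq0 : q ≠ 0) (n j : ℕ) :
    qA q (n + 1) (j + 1) = (1 - q ^ (-((n : ℤ) + 1))) * qA q n j := by
  unfold qA
  rw [Finset.prod_range_succ']
  have h : ∀ i : ℕ, q ^ (-((n + 1 : ℕ) : ℤ)) * q ^ (i + 1) = q ^ (-(n : ℤ)) * q ^ i := by
    intro i
    rw [pow_succ]
    push_cast
    rw [show -((n : ℤ) + 1) = -(n : ℤ) + (-1) by ring, zpow_add₀ hq0, zpow_neg_one]
    field_simp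
  have h0 : (1 : ℂ) - q ^ (-((n + 1 : ℕ) : ℤ)) * q ^ (0 : ℕ) = 1 - q ^ (-((n : ℤ) + 1)) := by
    push_cast; simp
  rw [h0, mul_comm]
  congr 1
  exact Finset.prod_congr rfl fun i _ => by rw [h i]

private lemma qA_succ (q : ℂ) (n j : ℕ) :
    qA q n (j + 1) = qA q n j * (1 - q ^ (-(n : ℤ)) * q ^ j) :=
  Finset.prod_range_succ _ _

private lemma qA_top (q : ℂ) (hq0 : q ≠ 0) (n : ℕ) : qA q n (n + 1) = 0 := by
  unfold qA
  apply Finset.prod_eq_zero (Finset.self_mem_range_succ n)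
  rw [← zpow_natCast q n, ← zpow_add₀ hq0]
  simp

private lemma qD_succ (q : ℂ) (j : ℕ) :
    qD q (j + 1) = qD q j * (1 - q ^ (j + 1)) :=
  Finset.prod_range_succ _ _

private lemma pascal (q : ℂ) (hq0 : q ≠ 0) (n j : ℕ) (hD : qD q (j + 1) ≠ 0) :
    qc q (n + 1) (j + 1) = qc q n (j + 1) - q ^ n * qc q n j := by
  have hDj : qD q j ≠ 0 := by
    intro h; apply hD; rw [qD_succ, h, zero_mul]
  have hfac : (1 : ℂ) - q ^ (j + 1) ≠ 0 := by
    intro h; apply hD; rw [qD_succ, h, mul_zero]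
  have hf : (1 : ℂ) - q ^ j * q ≠ 0 := by rw [← pow_succ]; exact hfac
  have hvu : q ^ (-((n : ℤ) + 1)) * q = q ^ (-(n : ℤ)) := by
    rw [show -((n : ℤ) + 1) = -(n : ℤ) + (-1) by ring, zpow_add₀ hq0, zpow_neg_one]
    field_simp
  have e1 : q ^ ((j + 1) * (n + 1)) = q ^ (j * n) * q ^ j * q ^ n * q := by
    rw [show (j + 1) * (n + 1) = j * n + j + n + 1 by ring, pow_add, pow_add, pow_add, pow_one]
  have e2 : q ^ ((j + 1) * n) = q ^ (j * n) * q ^ n := by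
    rw [show (j + 1) * n = j * n + n by ring, pow_add]
  have key : (1 - q ^ (-((n : ℤ) + 1))) * (q ^ (j * n) * q ^ j * q ^ n * q) =
      (1 - q ^ (-(n : ℤ)) * q ^ j) * (q ^ (j * n) * q ^ n)
        - (1 - q ^ j * q) * (q ^ n * q ^ (j * n)) := by
    linear_combination (-(q ^ j * q ^ (j * n) * q ^ n)) * hvu
  unfold qc
  rw [qA_succ_left q hq0, qA_succ, qD_succ, e1, e2, pow_succ]
  set v := q ^ (-((n : ℤ) + 1)) with hv
  set u := q ^ (-(n : ℤ)) with hu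
  field_simp
  linear_combination (-(qA q n j * q ^ j)) * hvu

private lemma qc_zero (q : ℂ) (n : ℕ) : qc q n 0 = 1 := by
  simp [qc, qA, qD]

private lemma key_expansion (q : ℂ) (hq0 : q ≠ 0) :
    ∀ n : ℕ, (∀ i : ℕ, 1 ≤ i → i ≤ n → q ^ i ≠ 1) → ∀ t : ℂ,
      ∏ i ∈ Finset.range n, (1 - t * q ^ i) =
        ∑ j ∈ Finset.range (n + 1), qc q n j * t ^ j := by
  intro n
  induction n with
  | zero => intro _ t; simp [qc_zero]
  | succ n ih =>
    intro hq t
    have hq' : ∀ i : ℕ, 1 ≤ i → i ≤ n → q ^ i ≠ 1 := fun i h1 h2 => hq i h1 (h2.trans n.le_succ)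
    have hD : ∀ j : ℕ, j ≤ n + 1 → qD q j ≠ 0 := by
      intro j hj
      unfold qD
      rw [Finset.prod_ne_zero_iff]
      intro i hi h
      have hi' := Finset.mem_range.1 hi
      exact hq (i + 1) (by omega) (by omega) ((sub_eq_zero.mp h).symm)
    have S := ih hq' t
    have htop : qc q n (n + 1) = 0 := by simp [qc, qA_top q hq0 n]
    rw [Finset.prod_range_succ, S]
    rw [Finset.sum_range_succ' (fun j => qc q (n + 1) j * t ^ j) (n + 1)]
    have hpas : ∀ j ∈ Finset.range (n + 1),
        qc q (n + 1) (j + 1) * t ^ (j + 1) =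
          qc q n (j + 1) * t ^ (j + 1) - q ^ n * t * (qc q n j * t ^ j) := by
      intro j hj
      have hj' := Finset.mem_range.1 hj
      rw [pascal q hq0 n j (hD (j + 1) (by omega))]
      ring
    rw [Finset.sum_congr rfl hpas, Finset.sum_sub_distrib, ← Finset.mul_sum]
    have h1 : ∑ j ∈ Finset.range (n + 1), qc q n (j + 1) * t ^ (j + 1) =
        (∑ j ∈ Finset.range (n + 1), qc q n j * t ^ j) - 1 := by
      have e := Finset.sum_range_succ' (fun j => qc q n j * t ^ j) (n + 1)
      have e2 := Finset.sum_range_succ (fun j => qc q n j * t ^ j) (n + 1)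
      beta_reduce at e e2
      rw [e2, htop, qc_zero] at e
      linear_combination -e
    rw [h1, qc_zero]
    ring

/-- **Finite q-binomial expansion** (relation (1.3.2) of Gasper–Rahman, in the
normalization used in the paper):
`(t;q)_n = ∑_{j=0}^{n} ((q^{-n};q)_j / (q;q)_j) * q^{j n} * t^j`,
where `(a;q)_m = ∏_{i=0}^{m-1} (1 - a q^i)`. -/
theorem q_pochhammer_expansion (n : ℕ) (q : ℂ) (hq0 : q ≠ 0)
    (hq : ∀ i : ℕ, 1 ≤ i → i ≤ n → q ^ i ≠ 1) (t : ℂ) :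
    ∏ i ∈ Finset.range n, (1 - t * q ^ i) =
      ∑ j ∈ Finset.range (n + 1),
        (∏ i ∈ Finset.range j, (1 - q ^ (-(n : ℤ)) * q ^ i)) /
            (∏ i ∈ Finset.range j, (1 - q ^ (i + 1))) *
          q ^ (j * n) * t ^ j := by
  exact key_expansion q hq0 n hq t
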